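/- Let L be a finite-dimensional simple Lie superalgebra over an algebraically closed field F of characteristic not 2. Then every skew-supersymmetric super-biderivation φ of L is inner: there exists λ ∈ F such that φ(x,y) = λ[x,y] for all x,y ∈ L. -/

import Mathlib

universe u v

def sSign (F : Type u) [Field F] (a b : Bool) : F := if a && b then -1 else 1

structure LieSuperAlgebra (F : Type u) (L : Type v) [Field F] [AddCommGroup L]
    [Module F L] where
  br : L →ₗ[F] L →ₗ[F] L
  grade : Bool → Submodule F L
  sup_eq_top : grade false ⊔ grade true = ⊤
  inf_eq_bot : grade false ⊓ grade true = ⊥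
  br_mem : ∀ a b x y, x ∈ grade a → y ∈ grade b → br x y ∈ grade (xor a b)
  super_skew : ∀ a b x y, x ∈ grade a → y ∈ grade b →
    br x y = - sSign F a b • br y x
  super_jacobi : ∀ a b x y z, x ∈ grade a → y ∈ grade b →
    br x (br y z) = br (br x y) z + sSign F a b • br y (br x z)

variable {F : Type u} {L : Type v} [Field F] [AddCommGroup L] [Module F L]

namespace LieSuperAlgebra

/-- A graded ideal: closed under bracketing with arbitrary elements, and
spanned by its homogeneous parts. -/
def IsGradedIdeal (A : LieSuperAlgebra F L) (I : Submodule F L) : Prop :=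
  (∀ x y, y ∈ I → A.br x y ∈ I) ∧ I = (I ⊓ A.grade false) ⊔ (I ⊓ A.grade true)

/-- Simplicity: no graded ideals other than 0 and L, and nonabelian. -/
def IsSimple (A : LieSuperAlgebra F L) : Prop :=
  (∀ I : Submodule F L, A.IsGradedIdeal I → I = ⊥ ∨ I = ⊤) ∧ ∃ x y, A.br x y ≠ 0

def IsEven (A : LieSuperAlgebra F L) (f : L →ₗ[F] L) : Prop :=
  ∀ a x, x ∈ A.grade a → f x ∈ A.grade a

def IsOdd (A : LieSuperAlgebra F L) (f : L →ₗ[F] L) : Prop :=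
  ∀ a x, x ∈ A.grade a → f x ∈ A.grade (!a)

/-- Even centroid condition: f([x,y]) = [f x, y] = [x, f y]. -/
def InEvenCentroid (A : LieSuperAlgebra F L) (f : L →ₗ[F] L) : Prop :=
  A.IsEven f ∧ ∀ x y, f (A.br x y) = A.br (f x) y ∧ f (A.br x y) = A.br x (f y)

/-- Odd centroid condition: f([x,y]) = [f x, y] = (-1)^{|x|}[x, f y]. -/
def InOddCentroid (A : LieSuperAlgebra F L) (f : L →ₗ[F] L) : Prop :=
  A.IsOdd f ∧ ∀ a x y, x ∈ A.grade a →
    f (A.br x y) = A.br (f x) y ∧ f (A.br x y) = sSign F a true • A.br x (f y)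

/-- Membership in the centroid for a homogeneous map of parity `p`:
`f ∘ ad x = (-1)^{|f||x|} ad x ∘ f` for all homogeneous `x`. -/
def InCentroid (A : LieSuperAlgebra F L) (p : Bool) (f : L →ₗ[F] L) : Prop :=
  (∀ a x, x ∈ A.grade a → f x ∈ A.grade (xor a p)) ∧
  ∀ a x y, x ∈ A.grade a → f (A.br x y) = sSign F p a • A.br x (f y)

/-- A homogeneous skew-supersymmetric super-biderivation of parity `p`. -/
def IsSuperBiderivation (A : LieSuperAlgebra F L) (p : Bool)
    (φ : L →ₗ[F] L →ₗ[F] L) : Prop :=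
  (∀ a b x y, x ∈ A.grade a → y ∈ A.grade b →
      φ x y ∈ A.grade (xor (xor a b) p)) ∧
  (∀ a b x y, x ∈ A.grade a → y ∈ A.grade b →
      φ x y = - sSign F a b • φ y x) ∧
  (∀ a b x y z, x ∈ A.grade a → y ∈ A.grade b →
      φ x (A.br y z) = A.br (φ x y) z + sSign F (xor p a) b • A.br y (φ x z))

end LieSuperAlgebra

open LieSuperAlgebra
set_option maxHeartbeats 1000000

variable {A : LieSuperAlgebra F L} {p : Bool} {φ : L →ₗ[F] L →ₗ[F] L}

lemma sbd_D1 (hφ : A.IsSuperBiderivation p φ) {a b c : Bool} {x y z : L}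
    (hx : x ∈ A.grade a) (hy : y ∈ A.grade b) (hz : z ∈ A.grade c) :
    φ (A.br x y) z = sSign F b c • A.br (φ x z) y + sSign F p a • A.br x (φ y z) := by
  obtain ⟨hom, skw, der⟩ := hφ
  have e1 := skw (xor a b) c (A.br x y) z (A.br_mem a b x y hx hy) hz
  have e2 := der c a z x y hz hx
  have e3 := skw c a z x hz hx
  have e4 := skw c b z y hz hy
  rw [e2, e3, e4] at e1
  simp only [map_smul, map_neg, LinearMap.smul_apply, LinearMap.neg_apply, smul_add,
    smul_smul, smul_neg, neg_smul, neg_neg] at e1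
  rw [e1]
  match_scalars <;> (cases p <;> cases a <;> cases b <;> cases c <;> norm_num [sSign])

lemma sbd_R (hφ : A.IsSuperBiderivation p φ) {a b c d : Bool} {x y u v : L}
    (hx : x ∈ A.grade a) (hy : y ∈ A.grade b) (hu : u ∈ A.grade c) (hv : v ∈ A.grade d) :
    A.br (φ x u) (A.br y v) = sSign F p (xor a c) • A.br (A.br x u) (φ y v)
      + (sSign F a b * sSign F a c * sSign F b c) • A.br (φ y u) (A.br x v)
      - (sSign F d b * sSign F d c) • A.br (φ x v) (A.br u y) := by
  obtain ⟨hom, skw, der⟩ := hφ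
  have a1 := der (xor a b) c (A.br x y) u v (A.br_mem a b x y hx hy) hu
  have a2 := sbd_D1 ⟨hom, skw, der⟩ hx hy hu
  have a3 := sbd_D1 ⟨hom, skw, der⟩ hx hy hv
  rw [a2, a3] at a1
  have b1 := sbd_D1 ⟨hom, skw, der⟩ hx hy (A.br_mem c d u v hu hv)
  have b2 := der a c x u v hx hu
  have b3 := der b c y u v hy hu
  rw [b2, b3] at b1
  simp only [map_add, map_smul, LinearMap.add_apply, LinearMap.smul_apply, smul_add,
    smul_smul] at a1 b1
  have jA := A.super_jacobi (xor (xor a c) p) b (φ x u) y v (hom a c x u hx hu) hy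
  have sA := A.super_skew b (xor (xor (xor a c) p) d) y (A.br (φ x u) v) hy
    (A.br_mem _ d (φ x u) v (hom a c x u hx hu) hv)
  have jB := A.super_jacobi a (xor (xor b c) p) x (φ y u) v hx (hom b c y u hy hu)
  have jC := A.super_jacobi c (xor (xor a d) p) u (φ x v) y hu (hom a d x v hx hv)
  have jD := A.super_jacobi a c x u (φ y v) hx hu
  linear_combination (norm :=
      (match_scalars <;> (cases p <;> cases a <;> cases b <;> cases c <;> cases d <;>
        norm_num [sSign])))
    jA - sSign F b c • a1 + sSign F b c • b1 + sSign F (xor (xor a c) p) b • sA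
    + (sSign F b c * sSign F p a) • jB - (sSign F p c * sSign F a c * sSign F b d) • jC
    + (sSign F p a * sSign F p c) • jD

/-- auxiliary expression for the symmetry chase -/
def sbdG (A : LieSuperAlgebra F L) (φ : L →ₗ[F] L →ₗ[F] L) (p t : Bool) (x u y v : L) : L :=
  A.br (φ x u) (A.br y v) - sSign F p t • A.br (A.br x u) (φ y v)

lemma sbd_gR (hφ : A.IsSuperBiderivation p φ) {a b c d : Bool} {x y u v : L}
    (hx : x ∈ A.grade a) (hy : y ∈ A.grade b) (hu : u ∈ A.grade c) (hv : v ∈ A.grade d) :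
    sbdG A φ p (xor a c) x u y v
      = (sSign F b c * sSign F b d * sSign F c d) • sbdG A φ p (xor a d) x v y u := by
  obtain ⟨hom, skw, der⟩ := hφ
  have hR := sbd_R ⟨hom, skw, der⟩ hx hy hu hv
  have s1 := A.super_skew (xor (xor b c) p) (xor a d) (φ y u) (A.br x v)
    (hom b c y u hy hu) (A.br_mem a d x v hx hv)
  have s2 := A.super_skew c b u y hu hy
  have s2' : A.br (φ x v) (A.br u y) = -sSign F c b • A.br (φ x v) (A.br y u) := by
    rw [s2]; simp
  simp only [sbdG]
  linear_combination (norm :=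
      (match_scalars <;> (cases p <;> cases a <;> cases b <;> cases c <;> cases d <;>
        norm_num [sSign])))
    hR + (sSign F a b * sSign F a c * sSign F b c) • s1
    - (sSign F d b * sSign F d c) • s2'

lemma sbd_gF1 (hφ : A.IsSuperBiderivation p φ) {a c : Bool} {x u : L}
    (hx : x ∈ A.grade a) (hu : u ∈ A.grade c) (y v : L) :
    sbdG A φ p (xor a c) x u y v = -sSign F a c • sbdG A φ p (xor a c) u x y v := by
  obtain ⟨hom, skw, der⟩ := hφ
  have s1 := skw a c x u hx hu
  have s2 := A.super_skew a c x u hx hu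
  have e1 : A.br (φ x u) (A.br y v) = -sSign F a c • A.br (φ u x) (A.br y v) := by
    rw [s1]; simp
  have e2 : A.br (A.br x u) (φ y v) = -sSign F a c • A.br (A.br u x) (φ y v) := by
    rw [s2]; simp
  simp only [sbdG]
  linear_combination (norm :=
      (match_scalars <;> (cases p <;> cases a <;> cases c <;> norm_num [sSign])))
    e1 - sSign F p (xor a c) • e2

lemma sbd_gF2 (hφ : A.IsSuperBiderivation p φ) {b d : Bool} {y v : L}
    (hy : y ∈ A.grade b) (hv : v ∈ A.grade d) (t : Bool) (x u : L) :
    sbdG A φ p t x u y v = -sSign F b d • sbdG A φ p t x u v y := by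
  obtain ⟨hom, skw, der⟩ := hφ
  have s1 := skw b d y v hy hv
  have s2 := A.super_skew b d y v hy hv
  have e1 : A.br (φ x u) (A.br y v) = -sSign F b d • A.br (φ x u) (A.br v y) := by
    rw [s2]; simp
  have e2 : A.br (A.br x u) (φ y v) = -sSign F b d • A.br (A.br x u) (φ v y) := by
    rw [s1]; simp
  simp only [sbdG]
  linear_combination (norm :=
      (match_scalars <;> (cases p <;> cases b <;> cases d <;> cases t <;> norm_num [sSign])))
    e1 - sSign F p t • e2

lemma sbd_gPS (hφ : A.IsSuperBiderivation p φ) {a b c d : Bool} {x y u v : L}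
    (hx : x ∈ A.grade a) (hy : y ∈ A.grade b) (hu : u ∈ A.grade c) (hv : v ∈ A.grade d) :
    sbdG A φ p (xor b d) y v x u
      = sSign F (xor a c) (xor b d) • sbdG A φ p (xor a c) x u y v := by
  obtain ⟨hom, skw, der⟩ := hφ
  have s1 := A.super_skew (xor (xor b d) p) (xor a c) (φ y v) (A.br x u)
    (hom b d y v hy hv) (A.br_mem a c x u hx hu)
  have s2 := A.super_skew (xor b d) (xor (xor a c) p) (A.br y v) (φ x u)
    (A.br_mem b d y v hy hv) (hom a c x u hx hu)
  simp only [sbdG]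
  linear_combination (norm :=
      (match_scalars <;> (cases p <;> cases a <;> cases b <;> cases c <;> cases d <;>
        norm_num [sSign])))
    s1 - sSign F p (xor b d) • s2

lemma sSign_ne_zero (a b : Bool) : sSign F a b ≠ 0 := by
  cases a <;> cases b <;> norm_num [sSign]

lemma sbd_two_nz (hchar : ringChar F ≠ 2) : (2 : F) ≠ 0 := by
  intro h
  haveI := ringChar.charP F
  have hdvd := (CharP.cast_eq_zero_iff F (ringChar F) 2).mp h
  rcases (Nat.dvd_prime Nat.prime_two).mp hdvd with h1 | h1
  · exact CharP.ringChar_ne_one h1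
  · exact hchar h1

lemma sbd_K (hφ : A.IsSuperBiderivation p φ) (hchar : ringChar F ≠ 2)
    {a b c d : Bool} {x y u v : L}
    (hx : x ∈ A.grade a) (hy : y ∈ A.grade b) (hu : u ∈ A.grade c) (hv : v ∈ A.grade d) :
    A.br (φ x u) (A.br y v) = sSign F p (xor a c) • A.br (A.br x u) (φ y v) := by
  have chainA : sbdG A φ p (xor a c) x u y v
      = sSign F b c • sbdG A φ p (xor a b) x y u v := by
    have h1 := sbd_gF1 hφ hx hu y v
    have h2 := sbd_gR hφ hu hy hx hv
    rw [Bool.xor_comm c a] at h2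
    have h3 := sbd_gPS hφ hy hu hx hv
    have h4 := sbd_gF1 hφ hy hx u v
    rw [h1, h2, h3, h4, Bool.xor_comm b a]
    match_scalars <;> (cases p <;> cases a <;> cases b <;> cases c <;> cases d <;>
      norm_num [sSign])
  have chainB : sbdG A φ p (xor a c) x u y v
      = -sSign F b c • sbdG A φ p (xor a b) x y u v := by
    have h1 := sbd_gR hφ hx hy hu hv
    have h2 := sbd_gF2 hφ hy hu (xor a d) x v
    have h3 := sbd_gR hφ hx hu hv hy
    rw [h1, h2, h3]
    match_scalars <;> (cases p <;> cases a <;> cases b <;> cases c <;> cases d <;>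
      norm_num [sSign])
  have key : (2 * sSign F b c) • sbdG A φ p (xor a b) x y u v = 0 := by
    have := chainA.symm.trans chainB
    linear_combination (norm := module) this
  have hX : sbdG A φ p (xor a b) x y u v = 0 := by
    rcases smul_eq_zero.mp key with h | h
    · exact absurd h (mul_ne_zero (sbd_two_nz hchar) (sSign_ne_zero b c))
    · exact h
  have hzero : sbdG A φ p (xor a c) x u y v = 0 := by rw [chainA, hX, smul_zero]
  have : A.br (φ x u) (A.br y v) - sSign F p (xor a c) • A.br (A.br x u) (φ y v) = 0 := hzero
  linear_combination (norm := module) this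


lemma sbd_split (A : LieSuperAlgebra F L) (z : L) :
    ∃ z0 z1, z0 ∈ A.grade false ∧ z1 ∈ A.grade true ∧ z = z0 + z1 := by
  have hz : z ∈ A.grade false ⊔ A.grade true := by rw [A.sup_eq_top]; trivial
  rcases Submodule.mem_sup.mp hz with ⟨z0, h0, z1, h1, hsum⟩
  exact ⟨z0, z1, h0, h1, hsum.symm⟩

lemma sbd_cancel {a : Bool} {u v : L}
    (hu : u ∈ A.grade a) (hv : v ∈ A.grade (!a)) (h : u + v = 0) : u = 0 ∧ v = 0 := by
  have huv : u = -v := by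
    have : u = -v + (u + v) := by abel
    rw [h, add_zero] at this; exact this
  have hu' : u ∈ A.grade (!a) := huv ▸ neg_mem hv
  have hbot : u ∈ (⊥ : Submodule F L) := by
    rw [← A.inf_eq_bot]
    cases a
    · exact ⟨hu, hu'⟩
    · exact ⟨hu', hu⟩
  have hu0 : u = 0 := by simpa using hbot
  refine ⟨hu0, ?_⟩
  have : v = -u := by
    have : v = -u + (u + v) := by abel
    rw [h, add_zero] at this; exact this
  rw [this, hu0, neg_zero]

/-- The "left annihilator" is trivial in a simple Lie superalgebra. -/
lemma sbd_center (hA : A.IsSimple) {m : L} (h : ∀ w, A.br m w = 0) : m = 0 := by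
  classical
  set Z : Submodule F L :=
    { carrier := {m | ∀ w, A.br m w = 0}
      add_mem' := by
        intro x y hx hy w
        simp only [Set.mem_setOf_eq] at hx hy
        simp [map_add, LinearMap.add_apply, hx w, hy w]
      zero_mem' := by intro w; simp
      smul_mem' := by
        intro c x hx w
        simp only [Set.mem_setOf_eq] at hx
        simp [map_smul, LinearMap.smul_apply, hx w] } with hZdef
  have hmemZ : ∀ n, n ∈ Z ↔ ∀ w, A.br n w = 0 := fun n => Iff.rfl
  -- homogeneous components of elements of Z are in Z
  have hcomp : ∀ n ∈ Z, ∃ n0 n1, n0 ∈ Z ∧ n1 ∈ Z ∧ n0 ∈ A.grade false ∧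
      n1 ∈ A.grade true ∧ n = n0 + n1 := by
    intro n hn
    rcases sbd_split A n with ⟨n0, n1, h0, h1, hsum⟩
    have key : ∀ (e : Bool) (w : L), w ∈ A.grade e → A.br n0 w = 0 ∧ A.br n1 w = 0 := by
      intro e w hw
      have hzero : A.br n0 w + A.br n1 w = 0 := by
        have : A.br n w = 0 := hn w
        rw [hsum] at this; simpa [map_add, LinearMap.add_apply] using this
      have m0 : A.br n0 w ∈ A.grade e := by
        simpa using A.br_mem false e n0 w h0 hw
      have m1 : A.br n1 w ∈ A.grade (!e) := by
        simpa using A.br_mem true e n1 w h1 hw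
      exact sbd_cancel m0 m1 hzero
    have hn0 : n0 ∈ Z := by
      intro w
      rcases sbd_split A w with ⟨w0, w1, hw0, hw1, hws⟩
      rw [hws]
      simp [map_add, (key false w0 hw0).1, (key true w1 hw1).1]
    have hn1 : n1 ∈ Z := by
      intro w
      rcases sbd_split A w with ⟨w0, w1, hw0, hw1, hws⟩
      rw [hws]
      simp [map_add, (key false w0 hw0).2, (key true w1 hw1).2]
    exact ⟨n0, n1, hn0, hn1, h0, h1, hsum⟩
  have hideal : A.IsGradedIdeal Z := by
    constructor
    · intro x n hn
      rcases hcomp n hn with ⟨n0, n1, hz0, hz1, hg0, hg1, hsum⟩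
      rcases sbd_split A x with ⟨x0, x1, hx0, hx1, hxs⟩
      have hpiece : ∀ (e f : Bool) (xe ne : L), xe ∈ A.grade e → ne ∈ A.grade f →
          ne ∈ Z → ∀ w, A.br (A.br xe ne) w = 0 := by
        intro e f xe ne hxe hne hneZ w
        have j := A.super_jacobi e f xe ne w hxe hne
        have h1 : A.br ne w = 0 := hneZ w
        have h2 : A.br ne (A.br xe w) = 0 := hneZ _
        rw [h1, h2] at j
        simp only [map_zero, smul_zero] at j
        linear_combination (norm := module) j.symm
      have : ∀ w, A.br (A.br x n) w = 0 := by
        intro w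
        rw [hxs, hsum]
        simp only [map_add, LinearMap.add_apply]
        rw [hpiece false false x0 n0 hx0 hg0 hz0 w, hpiece false true x0 n1 hx0 hg1 hz1 w,
          hpiece true false x1 n0 hx1 hg0 hz0 w, hpiece true true x1 n1 hx1 hg1 hz1 w]
        simp
      exact this
    · apply le_antisymm
      · intro n hn
        rcases hcomp n hn with ⟨n0, n1, hz0, hz1, hg0, hg1, hsum⟩
        rw [hsum]
        exact add_mem (Submodule.mem_sup_left ⟨hz0, hg0⟩)
          (Submodule.mem_sup_right ⟨hz1, hg1⟩)
      · exact sup_le inf_le_left inf_le_left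
  rcases hA.1 Z hideal with hbot | htop
  · have : m ∈ Z := h
    rw [hbot] at this; simpa using this
  · exfalso
    rcases hA.2 with ⟨x, y, hxy⟩
    have : x ∈ Z := by rw [htop]; trivial
    exact hxy (this y)

/-- span of homogeneous brackets of total parity `t` -/
def sbdD (A : LieSuperAlgebra F L) (t : Bool) : Submodule F L :=
  Submodule.span F {w | ∃ (b c : Bool) (x y : L),
    x ∈ A.grade b ∧ y ∈ A.grade c ∧ xor b c = t ∧ A.br x y = w}

lemma sbd_D_le_grade (A : LieSuperAlgebra F L) (t : Bool) : sbdD A t ≤ A.grade t := by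
  apply Submodule.span_le.mpr
  rintro w ⟨b, c, x, y, hx, hy, hbc, rfl⟩
  exact hbc ▸ A.br_mem b c x y hx hy

lemma sbd_br_mem_sup (A : LieSuperAlgebra F L) (x y : L) :
    A.br x y ∈ sbdD A false ⊔ sbdD A true := by
  rcases sbd_split A x with ⟨x0, x1, hx0, hx1, rfl⟩
  rcases sbd_split A y with ⟨y0, y1, hy0, hy1, rfl⟩
  have gen : ∀ (b c : Bool) (u v : L), u ∈ A.grade b → v ∈ A.grade c →
      A.br u v ∈ sbdD A false ⊔ sbdD A true := by
    intro b c u v hu hv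
    have : A.br u v ∈ sbdD A (xor b c) :=
      Submodule.subset_span ⟨b, c, u, v, hu, hv, rfl, rfl⟩
    cases hxy : (xor b c)
    · exact Submodule.mem_sup_left (hxy ▸ this)
    · exact Submodule.mem_sup_right (hxy ▸ this)
  simp only [map_add, LinearMap.add_apply]
  exact add_mem (add_mem (gen _ _ _ _ hx0 hy0) (gen _ _ _ _ hx1 hy0))
    (add_mem (gen _ _ _ _ hx0 hy1) (gen _ _ _ _ hx1 hy1))

lemma sbd_Dsup (hA : A.IsSimple) : sbdD A false ⊔ sbdD A true = ⊤ := by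
  set I := sbdD A false ⊔ sbdD A true with hI
  have hideal : A.IsGradedIdeal I := by
    constructor
    · intro x n hn
      have hle : I ≤ Submodule.comap (A.br x) I := by
        rw [hI]
        apply sup_le <;>
          · apply Submodule.span_le.mpr
            rintro w ⟨b, c, u, v, hu, hv, hbc, rfl⟩
            exact Submodule.mem_comap.mpr (sbd_br_mem_sup A x (A.br u v))
      exact Submodule.mem_comap.mp (hle hn)
    · apply le_antisymm
      · rw [hI]
        apply sup_le
        · exact le_trans (le_inf le_sup_left (sbd_D_le_grade A false)) le_sup_left
        · exact le_trans (le_inf le_sup_right (sbd_D_le_grade A true)) le_sup_right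
      · exact sup_le inf_le_left inf_le_left
  rcases hA.1 I hideal with hbot | htop
  · exfalso
    rcases hA.2 with ⟨x, y, hxy⟩
    have := sbd_br_mem_sup A x y
    rw [← hI, hbot] at this
    exact hxy (by simpa using this)
  · exact htop

lemma sbd_gradeD (hA : A.IsSimple) {t : Bool} : A.grade t ≤ sbdD A t := by
  intro z hz
  have : z ∈ sbdD A false ⊔ sbdD A true := by rw [sbd_Dsup hA]; trivial
  rcases Submodule.mem_sup.mp this with ⟨d0, hd0, d1, hd1, hsum⟩
  cases t
  · have h1 : z - d0 = d1 := by rw [← hsum]; abel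
    have m1 : z - d0 ∈ A.grade false :=
      sub_mem hz (sbd_D_le_grade A false hd0)
    have m2 : z - d0 ∈ A.grade true := h1 ▸ sbd_D_le_grade A true hd1
    have : z - d0 ∈ (⊥ : Submodule F L) := by rw [← A.inf_eq_bot]; exact ⟨m1, m2⟩
    have : z = d0 := by
      have h0 : z - d0 = 0 := by simpa using this
      have := sub_eq_zero.mp h0; exact this
    rw [this]; exact hd0
  · have h1 : z - d1 = d0 := by rw [← hsum]; abel
    have m1 : z - d1 ∈ A.grade true :=
      sub_mem hz (sbd_D_le_grade A true hd1)
    have m2 : z - d1 ∈ A.grade false := h1 ▸ sbd_D_le_grade A false hd0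
    have : z - d1 ∈ (⊥ : Submodule F L) := by rw [← A.inf_eq_bot]; exact ⟨m2, m1⟩
    have : z = d1 := by
      have h0 : z - d1 = 0 := by simpa using this
      exact sub_eq_zero.mp h0
    rw [this]; exact hd1

lemma sbd_ann (hA : A.IsSimple) {m : L}
    (h : ∀ (bb cc : Bool) (r s : L), r ∈ A.grade bb → s ∈ A.grade cc →
      A.br m (A.br r s) = 0) : m = 0 := by
  apply sbd_center hA
  intro w
  have hw : w ∈ sbdD A false ⊔ sbdD A true := by rw [sbd_Dsup hA]; trivial
  have hker : sbdD A false ⊔ sbdD A true ≤ LinearMap.ker (A.br m) := by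
    apply sup_le <;>
      · apply Submodule.span_le.mpr
        rintro w' ⟨b, c, r, s, hr, hs, hbc, rfl⟩
        exact LinearMap.mem_ker.mpr (h b c r s hr hs)
  exact LinearMap.mem_ker.mp (hker hw)

lemma sbd_pre (hφ : A.IsSuperBiderivation p φ) (hchar : ringChar F ≠ 2)
    {a c zd e f : Bool} {x u z r s : L}
    (hx : x ∈ A.grade a) (hu : u ∈ A.grade c) (hz : z ∈ A.grade zd)
    (hr : r ∈ A.grade e) (hs : s ∈ A.grade f) :
    A.br (φ (A.br x u) z) (A.br r s) = A.br (A.br (φ x u) z) (A.br r s) := by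
  obtain ⟨hom, skw, der⟩ := hφ
  have h1 := sbd_K ⟨hom, skw, der⟩ hchar (A.br_mem a c x u hx hu) hr hz hs
  have j := A.super_jacobi a c x u z hx hu
  have j' : A.br (A.br x u) z = A.br x (A.br u z) - sSign F a c • A.br u (A.br x z) := by
    linear_combination (norm := module) -j
  rw [j'] at h1
  simp only [map_sub, map_smul, LinearMap.sub_apply, LinearMap.smul_apply, smul_sub,
    smul_smul] at h1
  have h3 := sbd_K ⟨hom, skw, der⟩ hchar hx hr (A.br_mem c zd u z hu hz) hs
  have h4 := sbd_K ⟨hom, skw, der⟩ hchar hu hr (A.br_mem a zd x z hx hz) hs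
  have hmid : A.br (φ (A.br x u) z) (A.br r s)
      = A.br (φ x (A.br u z)) (A.br r s) - sSign F a c • A.br (φ u (A.br x z)) (A.br r s) := by
    linear_combination (norm :=
        (match_scalars <;> (cases p <;> cases a <;> cases c <;> cases zd <;>
          norm_num [sSign])))
      h1 - h3 + sSign F a c • h4
  have d3 := der a c x u z hx hu
  have d4 := der c a u x z hu hx
  have sk := skw c a u x hu hx
  rw [d3, d4, sk] at hmid
  simp only [map_add, map_smul, map_neg, LinearMap.add_apply, LinearMap.smul_apply,
    LinearMap.neg_apply, smul_add, smul_smul, smul_neg, neg_smul, neg_neg] at hmid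
  have d1 := sbd_D1 ⟨hom, skw, der⟩ hx hu hz
  have h5 : A.br (φ (A.br x u) z) (A.br r s)
      = sSign F c zd • A.br (A.br (φ x z) u) (A.br r s)
        + sSign F p a • A.br (A.br x (φ u z)) (A.br r s) := by
    rw [d1]
    simp only [map_add, map_smul, LinearMap.add_apply, LinearMap.smul_apply]
  have cnv := A.super_skew c (xor (xor a zd) p) u (φ x z) hu (hom a zd x z hx hz)
  have cnv' : A.br (A.br u (φ x z)) (A.br r s)
      = -sSign F c (xor (xor a zd) p) • A.br (A.br (φ x z) u) (A.br r s) := by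
    rw [cnv]
    simp only [map_smul, map_neg, LinearMap.smul_apply, LinearMap.neg_apply, neg_smul]
  have twoeq : (2 : F) • A.br (φ (A.br x u) z) (A.br r s)
      = (2 : F) • A.br (A.br (φ x u) z) (A.br r s) := by
    linear_combination (norm :=
        (match_scalars <;> (cases p <;> cases a <;> cases c <;> cases zd <;>
          norm_num [sSign])))
      hmid + h5 + sSign F (xor p a) c • cnv'
  exact smul_right_injective L (sbd_two_nz hchar) twoeq

lemma sbd_C1 (hφ : A.IsSuperBiderivation p φ) (hA : A.IsSimple) (hchar : ringChar F ≠ 2)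
    {a c : Bool} {x u : L} (hx : x ∈ A.grade a) (hu : u ∈ A.grade c) (z : L) :
    φ (A.br x u) z = A.br (φ x u) z := by
  have hpre : ∀ (zd : Bool) (z' : L), z' ∈ A.grade zd →
      φ (A.br x u) z' = A.br (φ x u) z' := by
    intro zd z' hz'
    have hW : ∀ (bb cc : Bool) (r s : L), r ∈ A.grade bb → s ∈ A.grade cc →
        A.br (φ (A.br x u) z' - A.br (φ x u) z') (A.br r s) = 0 := by
      intro bb cc r s hr hs
      have := sbd_pre hφ hchar hx hu hz' hr hs
      simp only [map_sub, LinearMap.sub_apply, this, sub_self]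
    have := sbd_ann hA hW
    exact sub_eq_zero.mp this
  rcases sbd_split A z with ⟨z0, z1, h0, h1, rfl⟩
  simp only [map_add]
  rw [hpre false z0 h0, hpre true z1 h1]

lemma sbd_C2 (hφ : A.IsSuperBiderivation p φ) (hA : A.IsSimple) (hchar : ringChar F ≠ 2)
    {a b d : Bool} {x y v : L} (hx : x ∈ A.grade a) (hy : y ∈ A.grade b)
    (hv : v ∈ A.grade d) :
    φ x (A.br y v) = sSign F p a • A.br x (φ y v) := by
  obtain ⟨hom, skw, der⟩ := hφ
  have e1 := skw a (xor b d) x (A.br y v) hx (A.br_mem b d y v hy hv)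
  have e2 := sbd_C1 ⟨hom, skw, der⟩ hA hchar hy hv x
  have e3 := A.super_skew (xor (xor b d) p) a (φ y v) x (hom b d y v hy hv) hx
  rw [e2, e3] at e1
  rw [e1]
  simp only [map_smul, map_neg, LinearMap.smul_apply, LinearMap.neg_apply, smul_neg,
    neg_smul, smul_smul, neg_neg]
  match_scalars <;> (cases p <;> cases a <;> cases b <;> cases d <;> norm_num [sSign])

lemma sbd_scalar [IsAlgClosed F] [FiniteDimensional F L] (hA : A.IsSimple)
    (ψ : L →ₗ[F] L) (hgr : ∀ (t : Bool) (w : L), w ∈ A.grade t → ψ w ∈ A.grade t)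
    (hcen : ∀ x z, ψ (A.br x z) = A.br x (ψ z)) : ∃ μ : F, ∀ w, ψ w = μ • w := by
  have : Nontrivial L := by
    rcases hA.2 with ⟨x, y, hxy⟩
    exact ⟨A.br x y, 0, hxy⟩
  obtain ⟨μ, hμ⟩ := Module.End.exists_eigenvalue (ψ : Module.End F L)
  obtain ⟨v, hv⟩ := hμ.exists_hasEigenvector
  set I : Submodule F L := LinearMap.ker (ψ - μ • LinearMap.id) with hIdef
  have hmem : ∀ w, w ∈ I ↔ ψ w = μ • w := by
    intro w
    rw [hIdef, LinearMap.mem_ker, LinearMap.sub_apply, LinearMap.smul_apply, LinearMap.id_apply,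
      sub_eq_zero]
  have hvI : v ∈ I := (hmem v).mpr hv.apply_eq_smul
  have hideal : A.IsGradedIdeal I := by
    constructor
    · intro x z hz
      rw [hmem] at hz ⊢
      rw [hcen x z, hz, map_smul]
    · apply le_antisymm
      · intro z hz
        rcases sbd_split A z with ⟨z0, z1, h0, h1, rfl⟩
        have key : ψ z0 - μ • z0 = 0 ∧ ψ z1 - μ • z1 = 0 := by
          apply sbd_cancel (a := false)
            (sub_mem (hgr false z0 h0) (Submodule.smul_mem _ μ h0))
            (sub_mem (hgr true z1 h1) (Submodule.smul_mem _ μ h1))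
          have := (hmem _).mp hz
          rw [map_add, smul_add] at this
          rw [← sub_eq_zero] at this
          linear_combination (norm := module) this
        exact add_mem
          (Submodule.mem_sup_left ⟨(hmem z0).mpr (sub_eq_zero.mp key.1), h0⟩)
          (Submodule.mem_sup_right ⟨(hmem z1).mpr (sub_eq_zero.mp key.2), h1⟩)
      · exact sup_le inf_le_left inf_le_left
  rcases hA.1 I hideal with hbot | htop
  · exfalso
    rw [hbot] at hvI
    exact hv.2 (by simpa using hvI)
  · refine ⟨μ, fun w => ?_⟩
    have : w ∈ I := by rw [htop]; trivial
    exact (hmem w).mp this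

open TensorProduct in
theorem superBiderivation_is_inner'
    [IsAlgClosed F] [FiniteDimensional F L] (hchar : ringChar F ≠ 2)
    (A : LieSuperAlgebra F L) (hA : A.IsSimple)
    (p : Bool) (φ : L →ₗ[F] L →ₗ[F] L) (hφ : A.IsSuperBiderivation p φ) :
    ∃ lam : F, ∀ x y : L, φ x y = lam • A.br x y := by
  classical
  set f : L ⊗[F] L →ₗ[F] L := TensorProduct.lift A.br with hfdef
  set g : L ⊗[F] L →ₗ[F] L := TensorProduct.lift φ with hgdef
  have hf_tmul : ∀ x y : L, f (x ⊗ₜ y) = A.br x y := fun x y => rfl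
  have hg_tmul : ∀ x y : L, g (x ⊗ₜ y) = φ x y := fun x y => rfl
  have hf_surj : Function.Surjective f := by
    rw [← LinearMap.range_eq_top]
    apply eq_top_iff.mpr
    rw [← sbd_Dsup hA]
    apply sup_le <;>
      · apply Submodule.span_le.mpr
        rintro w ⟨b, c, x, y, hx, hy, hbc, rfl⟩
        exact ⟨x ⊗ₜ y, rfl⟩
  -- parity components of tensors
  set Spar : Bool → Submodule F (L ⊗[F] L) := fun t => Submodule.span F
    {w | ∃ (b c : Bool) (x y : L), x ∈ A.grade b ∧ y ∈ A.grade c ∧ xor b c = t ∧ x ⊗ₜ y = w}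
    with hSpardef
  have hSsup : Spar false ⊔ Spar true = ⊤ := by
    apply eq_top_iff.mpr
    rw [← TensorProduct.span_tmul_eq_top F L L]
    apply Submodule.span_le.mpr
    rintro w ⟨m, n, rfl⟩
    rcases sbd_split A m with ⟨m0, m1, hm0, hm1, rfl⟩
    rcases sbd_split A n with ⟨n0, n1, hn0, hn1, rfl⟩
    have gen : ∀ (b c : Bool) (x y : L), x ∈ A.grade b → y ∈ A.grade c →
        x ⊗ₜ[F] y ∈ Spar false ⊔ Spar true := by
      intro b c x y hx hy
      have : x ⊗ₜ[F] y ∈ Spar (xor b c) :=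
        Submodule.subset_span ⟨b, c, x, y, hx, hy, rfl, rfl⟩
      cases hxy : (xor b c)
      · exact Submodule.mem_sup_left (hxy ▸ this)
      · exact Submodule.mem_sup_right (hxy ▸ this)
    rw [TensorProduct.add_tmul, TensorProduct.tmul_add, TensorProduct.tmul_add]
    exact add_mem (add_mem (gen _ _ _ _ hm0 hn0) (gen _ _ _ _ hm0 hn1))
      (add_mem (gen _ _ _ _ hm1 hn0) (gen _ _ _ _ hm1 hn1))
  have hf_par : ∀ (t : Bool) (w : L ⊗[F] L), w ∈ Spar t → f w ∈ A.grade t := by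
    intro t w hw
    have : Spar t ≤ Submodule.comap f (A.grade t) := by
      apply Submodule.span_le.mpr
      rintro w' ⟨b, c, x, y, hx, hy, hbc, rfl⟩
      exact Submodule.mem_comap.mpr (by rw [hf_tmul]; exact hbc ▸ A.br_mem b c x y hx hy)
    exact Submodule.mem_comap.mp (this hw)
  have hkey : ∀ (t : Bool) (w : L ⊗[F] L), w ∈ Spar t →
      ∀ (bb dd : Bool) (y v : L), y ∈ A.grade bb → v ∈ A.grade dd →
        A.br (g w) (A.br y v) = sSign F p t • A.br (f w) (φ y v) := by
    intro t w hw bb dd y v hy hv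
    set K : Submodule F (L ⊗[F] L) := LinearMap.ker
      ((A.br.flip (A.br y v)).comp g - sSign F p t • (A.br.flip (φ y v)).comp f) with hKdef
    have hmemK : ∀ w', w' ∈ K ↔
        A.br (g w') (A.br y v) = sSign F p t • A.br (f w') (φ y v) := by
      intro w'
      rw [hKdef, LinearMap.mem_ker, LinearMap.sub_apply, LinearMap.smul_apply,
        LinearMap.comp_apply, LinearMap.comp_apply, LinearMap.flip_apply,
        LinearMap.flip_apply, sub_eq_zero]
    have hle : Spar t ≤ K := by
      apply Submodule.span_le.mpr
      rintro w' ⟨b, c, x, u, hx, hu, hbc, rfl⟩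
      rw [SetLike.mem_coe, hmemK, hg_tmul, hf_tmul]
      have := sbd_K hφ hchar hx hy hu hv
      rw [this, hbc]
    exact (hmemK w).mp (hle hw)
  have hker : LinearMap.ker f ≤ LinearMap.ker g := by
    intro w hw
    have hw' : w ∈ Spar false ⊔ Spar true := by rw [hSsup]; trivial
    rcases Submodule.mem_sup.mp hw' with ⟨w0, hw0, w1, hw1, hsum⟩
    have hf0 : f w0 + f w1 = 0 := by
      rw [← map_add, hsum]; exact LinearMap.mem_ker.mp hw
    have hcanc := sbd_cancel (hf_par false w0 hw0)
      (by simpa using hf_par true w1 hw1) hf0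
    have hgz : ∀ (t : Bool) (w' : L ⊗[F] L), w' ∈ Spar t → f w' = 0 → g w' = 0 := by
      intro t w' hw' hfz
      apply sbd_ann hA
      intro bb cc r s hr hs
      rw [hkey t w' hw' bb cc r s hr hs, hfz, map_zero, LinearMap.zero_apply, smul_zero]
    rw [LinearMap.mem_ker, ← hsum, map_add, hgz false w0 hw0 hcanc.1,
      hgz true w1 hw1 hcanc.2, add_zero]
  -- the centroid-type map θ
  set e := f.quotKerEquivOfSurjective hf_surj with hedef
  set θ : L →ₗ[F] L := (Submodule.liftQ (LinearMap.ker f) g hker).comp e.symm.toLinearMap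
    with hθdef
  have hθf : ∀ w : L ⊗[F] L, θ (f w) = g w := by
    intro w
    have h1 : e.symm (f w) = Submodule.Quotient.mk w := by
      apply e.injective
      rw [LinearEquiv.apply_symm_apply]
      rfl
    rw [hθdef, LinearMap.comp_apply, LinearEquiv.coe_toLinearMap, h1, Submodule.liftQ_apply]
  have hθbr : ∀ x y : L, θ (A.br x y) = φ x y := by
    intro x y
    have := hθf (x ⊗ₜ y)
    rwa [hf_tmul, hg_tmul] at this
  -- θ is a centroid element
  have hθ1 : ∀ w z : L, φ w z = A.br (θ w) z := by
    intro w z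
    set K : Submodule F L := LinearMap.ker
      (φ.flip z - (A.br.flip z).comp θ) with hKdef
    have hmemK : ∀ w', w' ∈ K ↔ φ w' z = A.br (θ w') z := by
      intro w'
      rw [hKdef, LinearMap.mem_ker, LinearMap.sub_apply, LinearMap.comp_apply,
        LinearMap.flip_apply, LinearMap.flip_apply, sub_eq_zero]
    have htop : (⊤ : Submodule F L) ≤ K := by
      rw [← sbd_Dsup hA]
      apply sup_le <;>
        · apply Submodule.span_le.mpr
          rintro w' ⟨b, c, x, u, hx, hu, hbc, rfl⟩
          rw [SetLike.mem_coe, hmemK, hθbr, sbd_C1 hφ hA hchar hx hu z]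
    exact (hmemK w).mp (htop trivial)
  have hθ2 : ∀ (aa : Bool) (x : L), x ∈ A.grade aa → ∀ z,
      φ x z = sSign F p aa • A.br x (θ z) := by
    intro aa x hx z
    set K : Submodule F L := LinearMap.ker
      (φ x - sSign F p aa • (A.br x).comp θ) with hKdef
    have hmemK : ∀ z', z' ∈ K ↔ φ x z' = sSign F p aa • A.br x (θ z') := by
      intro z'
      rw [hKdef, LinearMap.mem_ker, LinearMap.sub_apply, LinearMap.smul_apply,
        LinearMap.comp_apply, sub_eq_zero]
    have htop : (⊤ : Submodule F L) ≤ K := by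
      rw [← sbd_Dsup hA]
      apply sup_le <;>
        · apply Submodule.span_le.mpr
          rintro w' ⟨b, c, y, v, hy, hv, hbc, rfl⟩
          rw [SetLike.mem_coe, hmemK, hθbr, sbd_C2 hφ hA hchar hx hy hv]
    exact (hmemK z).mp (htop trivial)
  have hθgr : ∀ (aa : Bool) (w : L), w ∈ A.grade aa → θ w ∈ A.grade (xor aa p) := by
    intro aa w hw
    have hle : sbdD A aa ≤ Submodule.comap θ (A.grade (xor aa p)) := by
      apply Submodule.span_le.mpr
      rintro w' ⟨b, c, x, y, hx, hy, hbc, rfl⟩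
      apply Submodule.mem_comap.mpr
      rw [hθbr]
      have := hφ.1 b c x y hx hy
      rwa [hbc] at this
    exact Submodule.mem_comap.mp (hle (sbd_gradeD hA hw))
  -- endgame
  have hsplitbr : ∀ (P : L → Prop), (∀ x1 x2, P x1 → P x2 → P (x1 + x2)) →
      (∀ (aa : Bool) (x : L), x ∈ A.grade aa → P x) → ∀ x, P x := by
    intro P hadd hhom x
    rcases sbd_split A x with ⟨x0, x1, h0, h1, rfl⟩
    exact hadd x0 x1 (hhom false x0 h0) (hhom true x1 h1)
  cases p with
  | false =>
    have hcen : ∀ x z, θ (A.br x z) = A.br x (θ z) := by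
      intro x z
      rcases sbd_split A x with ⟨x0, x1, h0, h1, rfl⟩
      have e0 := hθ2 false x0 h0 z
      have e1 := hθ2 true x1 h1 z
      have hb : A.br (x0 + x1) z = A.br x0 z + A.br x1 z := by
        simp [map_add, LinearMap.add_apply]
      have hb' : A.br (x0 + x1) (θ z) = A.br x0 (θ z) + A.br x1 (θ z) := by
        simp [map_add, LinearMap.add_apply]
      rw [hb, hb', map_add, hθbr x0 z, hθbr x1 z, e0, e1]
      norm_num [sSign]
    have hgr : ∀ (t : Bool) (w : L), w ∈ A.grade t → θ w ∈ A.grade t := by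
      intro t w hw; simpa using hθgr t w hw
    obtain ⟨μ, hμ⟩ := sbd_scalar hA θ hgr hcen
    exact ⟨μ, fun x y => by rw [← hθbr, hμ]⟩
  | true =>
    set ψ : L →ₗ[F] L := θ.comp θ with hψdef
    have hψw : ∀ w, ψ w = θ (θ w) := fun w => rfl
    have hψgr : ∀ (t : Bool) (w : L), w ∈ A.grade t → ψ w ∈ A.grade t := by
      intro t w hw
      have := hθgr (xor t true) (θ w) (hθgr t w hw)
      rw [hψw]; simpa using this
    have hth2 : ∀ (aa : Bool) (x : L), x ∈ A.grade aa → ∀ z,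
        θ (A.br x z) = sSign F true aa • A.br x (θ z) := by
      intro aa x hx z
      rw [hθbr x z]
      exact hθ2 aa x hx z
    have hψcen : ∀ x z, ψ (A.br x z) = A.br x (ψ z) := by
      intro x z
      have hhom : ∀ (aa : Bool) (x' : L), x' ∈ A.grade aa →
          ψ (A.br x' z) = A.br x' (ψ z) := by
        intro aa x' hx'
        rw [hψw, hth2 aa x' hx' z, map_smul, hth2 aa x' hx' (θ z), smul_smul, hψw]
        cases aa <;> norm_num [sSign]
      rcases sbd_split A x with ⟨x0, x1, h0, h1, rfl⟩
      have hb : A.br (x0 + x1) z = A.br x0 z + A.br x1 z := by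
        simp [map_add, LinearMap.add_apply]
      have hb' : A.br (x0 + x1) (ψ z) = A.br x0 (ψ z) + A.br x1 (ψ z) := by
        simp [map_add, LinearMap.add_apply]
      rw [hb, hb', map_add, hhom false x0 h0, hhom true x1 h1]
    obtain ⟨μ, hμ⟩ := sbd_scalar hA ψ hψgr hψcen
    -- show μ = 0
    have hbrhom : ∃ (aa ee : Bool) (x' z' : L), x' ∈ A.grade aa ∧ z' ∈ A.grade ee ∧
        A.br x' z' ≠ 0 := by
      by_contra hno
      push_neg at hno
      rcases hA.2 with ⟨x, y, hxy⟩
      rcases sbd_split A x with ⟨x0, x1, h0, h1, rfl⟩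
      rcases sbd_split A y with ⟨y0, y1, hy0, hy1, rfl⟩
      apply hxy
      simp only [map_add, LinearMap.add_apply]
      rw [hno false false x0 y0 h0 hy0, hno false true x0 y1 h0 hy1,
        hno true false x1 y0 h1 hy0, hno true true x1 y1 h1 hy1]
      simp
    obtain ⟨aa, ee, x', z', hx', hz', hbrnz⟩ := hbrhom
    have way1 : A.br (θ x') (θ z') = (sSign F true aa * μ) • A.br x' z' := by
      have h1 : A.br (θ x') (θ z') = φ x' (θ z') := (hθ1 x' (θ z')).symm
      rw [h1, hθ2 aa x' hx' (θ z'), ← hψw, hμ, map_smul, smul_smul]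
    have way2 : A.br (θ x') (θ z') =
        (sSign F (!aa) (!ee) * sSign F true ee * μ * sSign F ee aa) • A.br x' z' := by
      have s1 := A.super_skew (!aa) (!ee) (θ x') (θ z')
        (by simpa using hθgr aa x' hx') (by simpa using hθgr ee z' hz')
      have h2 : A.br (θ z') (θ x') = φ z' (θ x') := (hθ1 z' (θ x')).symm
      rw [s1, h2, hθ2 ee z' hz' (θ x'), ← hψw, hμ, map_smul]
      have s2 := A.super_skew ee aa z' x' hz' hx'
      rw [s2]
      simp only [smul_smul, smul_neg, neg_smul, smul_add, map_smul, map_neg,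
        LinearMap.smul_apply, LinearMap.neg_apply, neg_neg]
      match_scalars
      cases aa <;> cases ee <;> norm_num [sSign]
    have hμ0 : μ = 0 := by
      have hcomb : (2 * sSign F true aa * μ) • A.br x' z' = 0 := by
        have := way1.symm.trans way2
        have h2 : (sSign F true aa * μ - sSign F (!aa) (!ee) * sSign F true ee * μ *
            sSign F ee aa) • A.br x' z' = 0 := by
          rw [sub_smul, this, sub_self]
        have heq : sSign F true aa * μ - sSign F (!aa) (!ee) * sSign F true ee * μ *
            sSign F ee aa = 2 * sSign F true aa * μ := by
          cases aa <;> cases ee <;> norm_num [sSign] <;> ring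
        rwa [heq] at h2
      rcases smul_eq_zero.mp hcomb with h | h
      · rcases mul_eq_zero.mp h with h' | h'
        · exact absurd h' (mul_ne_zero (sbd_two_nz hchar) (sSign_ne_zero true aa))
        · exact h'
      · exact absurd h hbrnz
    have hθ0 : ∀ w, θ w = 0 := by
      have hψ0 : ∀ w, θ (θ w) = 0 := by
        intro w; rw [← hψw, hμ, hμ0, zero_smul]
      -- ker θ is a graded ideal
      set I : Submodule F L := LinearMap.ker θ with hIdef
      have hideal : A.IsGradedIdeal I := by
        constructor
        · intro x z hz
          rw [LinearMap.mem_ker] at hz ⊢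
          have hhom : ∀ (aa' : Bool) (x1 : L), x1 ∈ A.grade aa' → θ (A.br x1 z) = 0 := by
            intro aa' x1 hx1
            rw [hth2 aa' x1 hx1 z, hz, map_zero, smul_zero]
          rcases sbd_split A x with ⟨x0, x1, h0, h1, rfl⟩
          have hb : A.br (x0 + x1) z = A.br x0 z + A.br x1 z := by
            simp [map_add, LinearMap.add_apply]
          rw [hb, map_add, hhom false x0 h0, hhom true x1 h1, add_zero]
        · apply le_antisymm
          · intro z hz
            rcases sbd_split A z with ⟨z0, z1, h0, h1, rfl⟩
            rw [LinearMap.mem_ker, map_add] at hz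
            have hcanc := sbd_cancel (a := true) (by simpa using hθgr false z0 h0)
              (by simpa using hθgr true z1 h1) hz
            exact add_mem
              (Submodule.mem_sup_left ⟨LinearMap.mem_ker.mpr hcanc.1, h0⟩)
              (Submodule.mem_sup_right ⟨LinearMap.mem_ker.mpr hcanc.2, h1⟩)
          · exact sup_le inf_le_left inf_le_left
      rcases hA.1 I hideal with hbot | htop
      · intro w
        have : θ w ∈ I := LinearMap.mem_ker.mpr (hψ0 w)
        rw [hbot] at this
        simpa using this
      · intro w
        have : w ∈ I := by rw [htop]; trivial
        exact LinearMap.mem_ker.mp this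
    exact ⟨0, fun x y => by rw [← hθbr, hθ0, zero_smul]⟩

theorem superBiderivation_is_inner
    [IsAlgClosed F] [FiniteDimensional F L] (hchar : ringChar F ≠ 2)
    (A : LieSuperAlgebra F L) (hA : A.IsSimple)
    (p : Bool) (φ : L →ₗ[F] L →ₗ[F] L) (hφ : A.IsSuperBiderivation p φ) :
    ∃ lam : F, ∀ x y : L, φ x y = lam • A.br x y :=
  superBiderivation_is_inner' hchar A hA p φ hφ
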